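/- The Lobachevsky function is π-periodic: for every real θ, Λ(θ + π) = Λ(θ). -/

import Mathlib

open MeasureTheory Real

/-- The Lobachevsky function `Λ(θ) = -∫₀^θ log |2 sin t| dt`. -/
noncomputable def lobachevsky (θ : ℝ) : ℝ :=
  -∫ t in (0:ℝ)..θ, Real.log |2 * Real.sin t|

namespace LobachevskyAux

noncomputable def f (t : ℝ) : ℝ := Real.log |2 * Real.sin t|

lemma f_periodic : Function.Periodic f Real.pi := by
  intro t
  simp only [f, Real.sin_add_pi, mul_neg, abs_neg]

lemma f_even (t : ℝ) : f (-t) = f t := by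
  simp only [f, Real.sin_neg, mul_neg, abs_neg]

lemma f_meas : Measurable f :=
  Real.measurable_log.comp ((Real.measurable_sin.const_mul 2).abs)

lemma f_int_base : IntervalIntegrable f volume 0 (Real.pi / 2) := by
  have hg : IntervalIntegrable (fun t : ℝ => 4 + 2 * t ^ (-(1/2) : ℝ)) volume 0 (Real.pi / 2) :=
    intervalIntegrable_const.add
      ((intervalIntegral.intervalIntegrable_rpow' (by norm_num)).const_mul 2)
  refine hg.mono_fun' (f_meas.aestronglyMeasurable) ?_
  rw [Filter.EventuallyLE, ae_restrict_iff' measurableSet_uIoc]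
  filter_upwards with x hx
  rw [Set.uIoc_of_le (by positivity : (0:ℝ) ≤ Real.pi / 2)] at hx
  obtain ⟨hx0, hx2⟩ := hx
  have hsin : 0 < Real.sin x :=
    Real.sin_pos_of_pos_of_lt_pi hx0 (lt_of_le_of_lt hx2 (by linarith [Real.pi_pos]))
  set s : ℝ := 2 * Real.sin x with hs
  have hspos : 0 < s := by positivity
  have habs : |2 * Real.sin x| = s := abs_of_pos hspos
  have h1 : Real.log s ≤ 2 * s ^ ((1:ℝ)/2) := by
    have := Real.log_le_rpow_div hspos.le (by norm_num : (0:ℝ) < 1/2)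
    calc Real.log s ≤ s ^ ((1:ℝ)/2) / (1/2) := this
    _ = 2 * s ^ ((1:ℝ)/2) := by ring
  have h2 : -Real.log s ≤ 2 * s ^ (-(1/2) : ℝ) := by
    have hlog := Real.log_le_rpow_div (inv_nonneg.2 hspos.le) (by norm_num : (0:ℝ) < 1/2)
    have hinv : (s⁻¹) ^ ((1:ℝ)/2) = s ^ (-(1/2) : ℝ) := by
      rw [← Real.rpow_neg_one, ← Real.rpow_mul hspos.le]
      norm_num
    rw [Real.log_inv, hinv] at hlog
    have hdiv : s ^ (-(1/2) : ℝ) / (1/2) = 2 * s ^ (-(1/2) : ℝ) := by ring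
    linarith [hdiv ▸ hlog]
  -- bound the positive-power term by a constant
  have hsle : s ≤ 4 := by
    have := Real.sin_le_one x
    nlinarith
  have h1' : 2 * s ^ ((1:ℝ)/2) ≤ 4 := by
    have : s ^ ((1:ℝ)/2) ≤ (4:ℝ) ^ ((1:ℝ)/2) :=
      Real.rpow_le_rpow hspos.le hsle (by norm_num)
    have h4 : (4:ℝ) ^ ((1:ℝ)/2) = 2 := by
      rw [show (4:ℝ) = 2 ^ (2:ℕ) by norm_num, ← Real.rpow_natCast,
        ← Real.rpow_mul (by norm_num)]
      norm_num
    nlinarith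
  -- bound the negative-power term using `x ≤ s`
  have hxs : x ≤ s := by
    have h := Real.mul_le_sin hx0.le hx2
    have hpi : Real.pi ≤ 4 := Real.pi_le_four
    have h' := mul_le_mul_of_nonneg_left h (by positivity : (0:ℝ) ≤ Real.pi / 2)
    have hps : Real.pi / 2 * (2 / Real.pi * x) = x := by
      field_simp
    rw [hps] at h'
    nlinarith [hsin.le]
  have h2' : s ^ (-(1/2) : ℝ) ≤ x ^ (-(1/2) : ℝ) :=
    Real.rpow_le_rpow_of_nonpos hx0 hxs (by norm_num)
  have hnorm : ‖f x‖ ≤ 4 + 2 * x ^ (-(1/2) : ℝ) := by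
    have hx12 : (0:ℝ) ≤ 2 * x ^ (-(1/2) : ℝ) := by positivity
    have : |Real.log s| ≤ 4 + 2 * s ^ (-(1/2) : ℝ) := by
      rcases abs_cases (Real.log s) with ⟨h, _⟩ | ⟨h, _⟩ <;> rw [h]
      · have : (0:ℝ) ≤ 2 * s ^ (-(1/2) : ℝ) := by positivity
        linarith
      · have : (0:ℝ) ≤ 2 * s ^ ((1:ℝ)/2) := by positivity
        linarith
    calc ‖f x‖ = |Real.log s| := by rw [f, habs, Real.norm_eq_abs]
    _ ≤ 4 + 2 * s ^ (-(1/2) : ℝ) := this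
    _ ≤ 4 + 2 * x ^ (-(1/2) : ℝ) := by linarith
  exact hnorm

lemma f_int_base' : IntervalIntegrable f volume (-(Real.pi / 2)) (Real.pi / 2) := by
  have h1 : IntervalIntegrable (fun x => f (-x)) volume (-0 : ℝ) (-(Real.pi / 2)) :=
    (IntervalIntegrable.iff_comp_neg (by simp)).mp f_int_base
  have h2 : IntervalIntegrable f volume (-(Real.pi / 2)) 0 := by
    have : (fun x => f (-x)) = f := funext f_even
    rw [this] at h1
    simpa using h1.symm
  exact h2.trans f_int_base

lemma f_int_key (k : ℤ) :
    IntervalIntegrable f volume ((k : ℝ) * Real.pi - Real.pi / 2)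
      ((k : ℝ) * Real.pi + Real.pi / 2) := by
  have h := f_int_base'.comp_add_right (-((k : ℝ) * Real.pi))
  have he : (fun x => f (x + -((k : ℝ) * Real.pi))) = f := by
    funext x
    have := (f_periodic.int_mul (-k)) x
    simpa [neg_mul, mul_comm] using this
  rw [he] at h
  have e1 : -(Real.pi / 2) - -((k : ℝ) * Real.pi) = (k : ℝ) * Real.pi - Real.pi / 2 := by ring
  have e2 : Real.pi / 2 - -((k : ℝ) * Real.pi) = (k : ℝ) * Real.pi + Real.pi / 2 := by ring
  rwa [e1, e2] at h

lemma f_int_chain (n : ℕ) :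
    IntervalIntegrable f volume (-((n : ℝ) * Real.pi) - Real.pi / 2)
      ((n : ℝ) * Real.pi + Real.pi / 2) := by
  induction n with
  | zero => simpa using f_int_base'
  | succ n ih =>
    have hl := f_int_key (-(n + 1) : ℤ)
    have hr := f_int_key ((n + 1) : ℤ)
    have e1 : ((-(n+1) : ℤ) : ℝ) * Real.pi - Real.pi / 2
        = -(((n+1 : ℕ) : ℝ) * Real.pi) - Real.pi / 2 := by push_cast; ring
    have e2 : ((-(n+1) : ℤ) : ℝ) * Real.pi + Real.pi / 2
        = -((n : ℝ) * Real.pi) - Real.pi / 2 := by push_cast; ring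
    have e3 : (((n+1) : ℤ) : ℝ) * Real.pi - Real.pi / 2
        = (n : ℝ) * Real.pi + Real.pi / 2 := by push_cast; ring
    have e4 : (((n+1) : ℤ) : ℝ) * Real.pi + Real.pi / 2
        = ((n+1 : ℕ) : ℝ) * Real.pi + Real.pi / 2 := by push_cast; ring
    rw [e1, e2] at hl
    rw [e3, e4] at hr
    exact (hl.trans ih).trans hr

lemma f_int (a b : ℝ) : IntervalIntegrable f volume a b := by
  obtain ⟨n, hn⟩ := exists_nat_gt (max |a| |b| / Real.pi)
  have hpi := Real.pi_pos
  have hmax : max |a| |b| ≤ (n : ℝ) * Real.pi := by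
    rw [div_lt_iff₀ hpi] at hn
    linarith
  have hmem : ∀ x : ℝ, |x| ≤ max |a| |b| →
      x ∈ Set.uIcc (-((n : ℝ) * Real.pi) - Real.pi / 2) ((n : ℝ) * Real.pi + Real.pi / 2) := by
    intro x hx
    have h1 : |x| ≤ (n : ℝ) * Real.pi := le_trans hx hmax
    rw [Set.uIcc_of_le (by linarith [abs_nonneg x, le_trans (neg_abs_le x) (le_abs_self x)] :
      -((n : ℝ) * Real.pi) - Real.pi / 2 ≤ (n : ℝ) * Real.pi + Real.pi / 2)]
    constructor
    · linarith [neg_abs_le x]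
    · linarith [le_abs_self x]
  exact (f_int_chain n).mono_set
    (Set.uIcc_subset_uIcc (hmem a (le_max_left _ _)) (hmem b (le_max_right _ _)))

lemma integral_zero_pi : ∫ t in (0:ℝ)..Real.pi, f t = 0 := by
  have hpi := Real.pi_pos
  set A := ∫ t in (0:ℝ)..(Real.pi/2), f t with hA
  -- second half equals A
  have h1 : ∫ t in (Real.pi/2)..Real.pi, f t = A := by
    have h := intervalIntegral.integral_comp_sub_left (a := 0) (b := Real.pi/2) f Real.pi
    have he : ∀ x, f (Real.pi - x) = f x := by
      intro x; simp only [f, Real.sin_pi_sub]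
    simp only [he] at h
    rw [show Real.pi - Real.pi/2 = Real.pi/2 by ring, sub_zero] at h
    exact h.symm
  have h2 : ∫ t in (0:ℝ)..Real.pi, f t = 2 * A := by
    rw [← intervalIntegral.integral_add_adjacent_intervals (f_int 0 (Real.pi/2))
      (f_int (Real.pi/2) Real.pi), h1]
    ring
  -- duplication formula
  have h3 : (2:ℝ) • (∫ x in (0:ℝ)..(Real.pi/2), f (2 * x)) = ∫ t in (0:ℝ)..Real.pi, f t := by
    have h := intervalIntegral.smul_integral_comp_mul_left (a := (0:ℝ)) (b := Real.pi/2) f 2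
    rw [mul_zero, show (2:ℝ) * (Real.pi/2) = Real.pi by ring] at h
    exact h
  -- log |2 sin 2x| = log |2 sin x| + log |2 cos x| a.e.
  set g : ℝ → ℝ := fun x => Real.log |2 * Real.cos x| with hg
  have hN : ∀ᵐ x : ℝ, x ∈ Set.uIoc (0:ℝ) (Real.pi/2) → f (2 * x) = f x + g x := by
    have hcount : Set.Countable {x : ℝ | Real.sin x = 0 ∨ Real.cos x = 0} := by
      apply Set.Countable.mono _ ((Set.countable_range (fun n : ℤ => (n:ℝ) * Real.pi)).union
        (Set.countable_range (fun n : ℤ => ((2*n+1:ℤ):ℝ) * Real.pi / 2)))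
      rintro x (hx | hx)
      · obtain ⟨n, hn⟩ := Real.sin_eq_zero_iff.mp hx
        exact Or.inl ⟨n, hn⟩
      · obtain ⟨n, hn⟩ := Real.cos_eq_zero_iff.mp hx
        refine Or.inr ⟨n, ?_⟩
        rw [hn]; push_cast; ring
    have hzero : volume {x : ℝ | Real.sin x = 0 ∨ Real.cos x = 0} = 0 :=
      hcount.measure_zero volume
    have hae : ∀ᵐ x : ℝ, ¬(Real.sin x = 0 ∨ Real.cos x = 0) := by
      rw [ae_iff]
      simp only [not_not]
      exact hzero
    filter_upwards [hae] with x hx _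
    rw [not_or] at hx
    obtain ⟨hs, hc⟩ := hx
    have hkey : |2 * Real.sin (2 * x)| = |2 * Real.sin x| * |2 * Real.cos x| := by
      rw [← abs_mul]
      congr 1
      rw [Real.sin_two_mul]; ring
    rw [f, f, hg, hkey, Real.log_mul]
    · rw [abs_ne_zero]
      exact mul_ne_zero two_ne_zero hs
    · rw [abs_ne_zero]
      exact mul_ne_zero two_ne_zero hc
  have h4 : ∫ x in (0:ℝ)..(Real.pi/2), f (2 * x)
      = ∫ x in (0:ℝ)..(Real.pi/2), (f x + g x) := by
    apply intervalIntegral.integral_congr_ae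
    simpa using hN
  -- g is interval integrable
  have hgf : g = fun x => f (Real.pi/2 - x) := by
    funext x
    simp only [g, f, Real.sin_pi_div_two_sub]
  have hgint : IntervalIntegrable g volume 0 (Real.pi/2) := by
    rw [hgf]
    have := (f_int 0 (Real.pi/2)).comp_sub_left (Real.pi/2)
    simpa using this.symm
  have h5 : ∫ x in (0:ℝ)..(Real.pi/2), (f x + g x) = A + A := by
    rw [intervalIntegral.integral_add (f_int 0 (Real.pi/2)) hgint]
    congr 1
    rw [hgf]
    have h := intervalIntegral.integral_comp_sub_left (a := 0) (b := Real.pi/2) f (Real.pi/2)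
    rw [h]
    norm_num
    exact hA.symm
  have : (2:ℝ) * (A + A) = 2 * A := by
    rw [← h2, ← h3, h4, h5]; simp
  have hA0 : A = 0 := by linarith
  rw [h2, hA0]; ring

end LobachevskyAux

/-- The Lobachevsky function is π-periodic. -/
theorem lobachevsky_add_pi (θ : ℝ) : lobachevsky (θ + Real.pi) = lobachevsky θ := by
  unfold lobachevsky
  have h := LobachevskyAux.f_periodic.intervalIntegral_add_eq_add 0 θ LobachevskyAux.f_int
  rw [zero_add] at h
  rw [show (fun t => Real.log |2 * Real.sin t|) = LobachevskyAux.f from rfl] at *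
  rw [h, LobachevskyAux.integral_zero_pi, add_zero]
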